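/- Let Q_3 be the 3-dimensional hypercube with vertex set {0,1}^3, rooted at r = (0,0,0). Define the weight function w' by w'(v) = 2 if v has exactly one coordinate equal to 1, w'(v) = 4/3 if v has exactly two coordinates equal to 1, w'((1,1,1)) = 1, and w'(r) = 0. Then w' is valid: every r-unsolvable configuration p on Q_3 satisfies w'(p) ≤ w'(1_{Q_3}) = 11. -/

import Mathlib

open SimpleGraph Finset

def PebMove {V : Type*} [DecidableEq V] (G : SimpleGraph V) (p q : V → ℕ) : Prop :=
  ∃ u v, G.Adj u v ∧ 2 ≤ p u ∧
    q = fun x => if x = u then p u - 2 else if x = v then p v + 1 else p x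

def Solvable {V : Type*} [DecidableEq V] (G : SimpleGraph V) (r : V) (p : V → ℕ) : Prop :=
  ∃ q, Relation.ReflTransGen (PebMove G) p q ∧ 1 ≤ q r

noncomputable def confWeight {V : Type*} [Fintype V] (w : V → ℝ) (p : V → ℕ) : ℝ :=
  ∑ v, (p v : ℝ) * w v

def ValidWeight {V : Type*} [Fintype V] [DecidableEq V] (G : SimpleGraph V) (r : V)
    (w : V → ℝ) : Prop :=
  w r = 0 ∧ (∀ v, v ≠ r → 0 < w v) ∧
    ∀ p : V → ℕ, ¬ Solvable G r p → confWeight w p ≤ confWeight w (fun _ => 1)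

noncomputable def rootedPebblingNumber {V : Type*} [Fintype V] [DecidableEq V]
    (G : SimpleGraph V) (r : V) : ℕ :=
  sInf {N | ∀ p : V → ℕ, N ≤ ∑ v, p v → Solvable G r p}

noncomputable def pebblingNumber {V : Type*} [Fintype V] [DecidableEq V]
    (G : SimpleGraph V) : ℕ :=
  sInf {N | ∀ (r : V) (p : V → ℕ), N ≤ ∑ v, p v → Solvable G r p}

def cubeGraph (n : ℕ) : SimpleGraph (Fin n → Bool) :=
  SimpleGraph.fromRel (fun x y => hammingDist x y = 1)

def addPendant {V : Type*} (G : SimpleGraph V) (a : V) : SimpleGraph (Option V) :=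
  SimpleGraph.fromRel (fun x y =>
    match x, y with
    | some u, some v => G.Adj u v
    | none, some u => u = a
    | _, _ => False)

def lollipop (n m : ℕ) : SimpleGraph (Fin (n + 1) ⊕ Fin (m + 1)) :=
  SimpleGraph.fromRel (fun x y =>
    match x, y with
    | Sum.inl i, Sum.inl j => (i : ℕ) + 1 = (j : ℕ)
    | Sum.inl i, Sum.inr j => i = 0 ∧ j ≠ 0
    | Sum.inr i, Sum.inr j => i = 0 ∧ j ≠ 0
    | _, _ => False)

noncomputable def w8 : (Fin 3 → Bool) → ℝ := fun v =>
  match (Finset.univ.filter fun i => v i = true).card with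
  | 0 => 0
  | 1 => 2
  | 2 => 4 / 3
  | _ => 1

-- auxiliary definitions and lemmas

abbrev V3 := Fin 3 → Bool
def rt : V3 := fun _ => false
def x100 : V3 := ![true, false, false]
def x010 : V3 := ![false, true, false]
def x001 : V3 := ![false, false, true]
def x110 : V3 := ![true, true, false]
def x101 : V3 := ![true, false, true]
def x011 : V3 := ![false, true, true]
def x111 : V3 := ![true, true, true]

def mv (u v : V3) (p : V3 → ℕ) : V3 → ℕ :=
  fun x => if x = u then p u - 2 else if x = v then p v + 1 else p x

def mvs : List (V3 × V3) :=
  [(x100, rt), (x010, rt), (x001, rt),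
   (x110, x100), (x110, x010), (x101, x100), (x101, x001),
   (x011, x010), (x011, x001),
   (x111, x110), (x111, x101), (x111, x011)]

lemma mvs_adj : ∀ m ∈ mvs, (cubeGraph 3).Adj m.1 m.2 := by
  intro m hm
  rw [cubeGraph, SimpleGraph.fromRel_adj]
  fin_cases hm <;> exact ⟨by decide, Or.inl (by decide)⟩

def solvB : ℕ → (V3 → ℕ) → Bool
  | 0, p => decide (1 ≤ p rt)
  | n + 1, p =>
      decide (1 ≤ p rt) ||
        mvs.any fun m => decide (2 ≤ p m.1) && solvB n (mv m.1 m.2 p)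

lemma solv_base {p : V3 → ℕ} (h : 1 ≤ p rt) : Solvable (cubeGraph 3) rt p :=
  ⟨p, Relation.ReflTransGen.refl, h⟩

lemma solv_step {p : V3 → ℕ} {u v : V3} (h : (cubeGraph 3).Adj u v) (h2 : 2 ≤ p u)
    (hs : Solvable (cubeGraph 3) rt (mv u v p)) : Solvable (cubeGraph 3) rt p := by
  obtain ⟨q, hq, hr⟩ := hs
  exact ⟨q, Relation.ReflTransGen.head ⟨u, v, h, h2, rfl⟩ hq, hr⟩

lemma solvB_sound : ∀ n p, solvB n p = true → Solvable (cubeGraph 3) rt p := by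
  intro n
  induction n with
  | zero => intro p h; exact solv_base (by simpa [solvB] using h)
  | succ n ih =>
      intro p h
      rw [solvB, Bool.or_eq_true, List.any_eq_true] at h
      rcases h with h | ⟨m, hm, h⟩
      · exact solv_base (by simpa using h)
      · rw [Bool.and_eq_true, decide_eq_true_iff] at h
        exact solv_step (mvs_adj m hm) h.1 (ih _ h.2)

-- repeated transfer of pebbles
lemma reach_transfer {u v : V3} (h : (cubeGraph 3).Adj u v) :
    ∀ (n : ℕ) (p : V3 → ℕ), 2 * n ≤ p u →
      Relation.ReflTransGen (PebMove (cubeGraph 3)) p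
        (fun x => if x = u then p u - 2 * n else if x = v then p v + n else p x) := by
  have huv : u ≠ v := h.ne
  intro n
  induction n with
  | zero =>
      intro p _
      have : (fun x => if x = u then p u - 2 * 0 else if x = v then p v + 0 else p x) = p := by
        funext x
        by_cases hx : x = u
        · simp [hx]
        · by_cases hx' : x = v <;> simp [hx, hx', huv.symm]
      rw [this]
  | succ n ih =>
      intro p hp
      have h2 : 2 ≤ p u := by omega
      have hstep : PebMove (cubeGraph 3) p (mv u v p) := ⟨u, v, h, h2, rfl⟩
      have hpu : mv u v p u = p u - 2 := by simp [mv]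
      have hpv : mv u v p v = p v + 1 := by simp [mv, huv.symm]
      have hrest := ih (mv u v p) (by rw [hpu]; omega)
      have heq : (fun x => if x = u then mv u v p u - 2 * n
            else if x = v then mv u v p v + n else mv u v p x)
          = (fun x => if x = u then p u - 2 * (n + 1) else if x = v then p v + (n + 1) else p x) := by
        funext x
        by_cases hx : x = u
        · subst hx; simp [mv, huv, huv.symm]; omega
        · by_cases hx' : x = v
          · subst hx'; simp [mv, hx, huv, huv.symm]; omega
          · simp [mv, hx, hx']
      rw [heq] at hrest
      exact Relation.ReflTransGen.head hstep hrest

lemma solv_of_reach {p q : V3 → ℕ}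
    (h : Relation.ReflTransGen (PebMove (cubeGraph 3)) p q)
    (hs : Solvable (cubeGraph 3) rt q) : Solvable (cubeGraph 3) rt p := by
  obtain ⟨q', hq', hr⟩ := hs
  exact ⟨q', h.trans hq', hr⟩

lemma cap1 {p : V3 → ℕ} {u : V3} (h : (cubeGraph 3).Adj u rt) (h2 : 2 ≤ p u) :
    Solvable (cubeGraph 3) rt p := by
  have hr := reach_transfer h 1 p (by omega)
  refine solv_of_reach hr (solv_base ?_)
  have : rt ≠ u := h.ne'
  simp [this]

lemma cap2 {p : V3 → ℕ} {u m : V3} (h1 : (cubeGraph 3).Adj u m) (h2 : (cubeGraph 3).Adj m rt)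
    (h4 : 4 ≤ p u) : Solvable (cubeGraph 3) rt p := by
  have hr := reach_transfer h1 2 p (by omega)
  refine solv_of_reach hr (cap1 h2 ?_)
  have hmu : m ≠ u := h1.ne'
  simp [hmu]

lemma cap3 {p : V3 → ℕ} {u m1 m2 : V3} (h1 : (cubeGraph 3).Adj u m1)
    (h2 : (cubeGraph 3).Adj m1 m2) (h3 : (cubeGraph 3).Adj m2 rt)
    (h8 : 8 ≤ p u) : Solvable (cubeGraph 3) rt p := by
  have hr := reach_transfer h1 4 p (by omega)
  refine solv_of_reach hr (cap2 h2 h3 ?_)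
  have hmu : m1 ≠ u := h1.ne'
  simp [hmu]

def cfg (a b c d e f g : ℕ) : V3 → ℕ := fun x =>
  if x = x100 then a else if x = x010 then b else if x = x001 then c
  else if x = x110 then d else if x = x101 then e else if x = x011 then f
  else if x = x111 then g else 0

set_option maxRecDepth 100000 in
lemma key : ∀ (a b c : Fin 2) (d e f : Fin 4) (g : Fin 8),
    33 < 6 * (a.val + b.val + c.val) + 4 * (d.val + e.val + f.val) + 3 * g.val →
    solvB 19 (cfg a.val b.val c.val d.val e.val f.val g.val) = true := by decide

lemma sum_expand (F : V3 → ℝ) :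
    ∑ v, F v = F rt + F x100 + F x010 + F x001 + F x110 + F x101 + F x011 + F x111 := by
  have huniv : (univ : Finset V3) = {rt, x100, x010, x001, x110, x101, x011, x111} := by decide
  rw [huniv]
  rw [Finset.sum_insert (by decide), Finset.sum_insert (by decide),
    Finset.sum_insert (by decide), Finset.sum_insert (by decide),
    Finset.sum_insert (by decide), Finset.sum_insert (by decide),
    Finset.sum_insert (by decide), Finset.sum_singleton]
  ring

lemma w8_rt : w8 rt = 0 := by
  have : (Finset.univ.filter fun i => rt i = true).card = 0 := by decide
  simp [w8, this]
lemma w8_1 {v : V3} (h : (Finset.univ.filter fun i => v i = true).card = 1) : w8 v = 2 := by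
  simp [w8, h]
lemma w8_2 {v : V3} (h : (Finset.univ.filter fun i => v i = true).card = 2) : w8 v = 4 / 3 := by
  simp [w8, h]
lemma w8_3 {v : V3} (h : (Finset.univ.filter fun i => v i = true).card = 3) : w8 v = 1 := by
  simp [w8, h]

theorem stmt8 :
    confWeight w8 (fun _ => 1) = 11 ∧
    ∀ p : (Fin 3 → Bool) → ℕ,
      ¬ Solvable (cubeGraph 3) (fun _ => false) p → confWeight w8 p ≤ 11 := by
  have e100 := w8_1 (v := x100) (by decide)
  have e010 := w8_1 (v := x010) (by decide)
  have e001 := w8_1 (v := x001) (by decide)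
  have e110 := w8_2 (v := x110) (by decide)
  have e101 := w8_2 (v := x101) (by decide)
  have e011 := w8_2 (v := x011) (by decide)
  have e111 := w8_3 (v := x111) (by decide)
  have a1 : (cubeGraph 3).Adj x100 rt := mvs_adj (x100, rt) (by simp [mvs])
  have a2 : (cubeGraph 3).Adj x010 rt := mvs_adj (x010, rt) (by simp [mvs])
  have a3 : (cubeGraph 3).Adj x001 rt := mvs_adj (x001, rt) (by simp [mvs])
  have a4 : (cubeGraph 3).Adj x110 x100 := mvs_adj (x110, x100) (by simp [mvs])
  have a5 : (cubeGraph 3).Adj x101 x100 := mvs_adj (x101, x100) (by simp [mvs])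
  have a6 : (cubeGraph 3).Adj x011 x010 := mvs_adj (x011, x010) (by simp [mvs])
  have a7 : (cubeGraph 3).Adj x111 x110 := mvs_adj (x111, x110) (by simp [mvs])
  constructor
  · rw [confWeight, sum_expand]
    rw [w8_rt, e100, e010, e001, e110, e101, e011, e111]
    norm_num
  · intro p hns
    have hrt : rt = (fun _ => false) := rfl
    rw [← hrt] at hns
    by_contra hcon
    push_neg at hcon
    -- caps
    have hr0 : p rt = 0 := by
      by_contra h; exact hns (solv_base (by omega))
    have hA : p x100 ≤ 1 := by by_contra h; exact hns (cap1 a1 (by omega))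
    have hB : p x010 ≤ 1 := by by_contra h; exact hns (cap1 a2 (by omega))
    have hC : p x001 ≤ 1 := by by_contra h; exact hns (cap1 a3 (by omega))
    have hD : p x110 ≤ 3 := by by_contra h; exact hns (cap2 a4 a1 (by omega))
    have hE : p x101 ≤ 3 := by by_contra h; exact hns (cap2 a5 a1 (by omega))
    have hF : p x011 ≤ 3 := by by_contra h; exact hns (cap2 a6 a2 (by omega))
    have hG : p x111 ≤ 7 := by by_contra h; exact hns (cap3 a7 a4 a1 (by omega))
    set a := p x100; set b := p x010; set c := p x001
    set d := p x110; set e := p x101; set f := p x011; set g := p x111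
    have hp : p = cfg a b c d e f g := by
      funext x
      have hx : x = rt ∨ x = x100 ∨ x = x010 ∨ x = x001 ∨ x = x110 ∨ x = x101 ∨
          x = x011 ∨ x = x111 := by revert x; decide
      rcases hx with h | h | h | h | h | h | h | h <;> subst h <;>
        simp (config := { decide := true }) [cfg, hr0] <;> rfl
    -- weight computation
    have hw : confWeight w8 p =
        a * 2 + b * 2 + c * 2 + d * (4 / 3) + e * (4 / 3) + f * (4 / 3) + g * 1 := by
      rw [confWeight, sum_expand]
      rw [w8_rt, e100, e010, e001, e110, e101, e011, e111, hr0]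
      push_cast
      ring
    have hint : 33 < 6 * (a + b + c) + 4 * (d + e + f) + 3 * g := by
      have h3 : (33 : ℝ) < 6 * (a + b + c) + 4 * (d + e + f) + 3 * g := by
        rw [hw] at hcon
        linarith
      exact_mod_cast h3
    have hsolv := solvB_sound 19 _
      (key ⟨a, by omega⟩ ⟨b, by omega⟩ ⟨c, by omega⟩ ⟨d, by omega⟩ ⟨e, by omega⟩
        ⟨f, by omega⟩ ⟨g, by omega⟩ (by simpa using hint))
    rw [← hp] at hsolv
    exact hns hsolv
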